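/- If β ≡ 0, then the C¹ coupling condition α^{(R)}(v) D_u g^{(L)}(0,v) = α^{(L)}(v) D_u g^{(R)}(0,v) together with coprimality of α^{(L)}, α^{(R)} (degrees ≤ 1) implies that there is a function g₁ with D_u g^{(S)}(0,v) = α^{(S)}(v) g₁(v) for S ∈ {L,R}, and if D_u g^{(S)}(0,·) are splines in S(T^{p,r}_k,[0,1]) then g₁ ∈ S(T^{p−d_α, r}_k,[0,1]). -/
import Mathlib


open Polynomial

/-- The extended knot sequence: `kn 0 = 0`, `kn i = τ i` for `1 ≤ i ≤ k`, and `kn i = 1`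
for `i > k`. -/
noncomputable def kn (k : ℕ) (τ : ℕ → ℝ) (i : ℕ) : ℝ :=
  if i = 0 then 0 else if i ≤ k then τ i else 1

/-- Valid interior knots: `0 < τ 1 < τ 2 < ⋯ < τ k < 1`. -/
def ValidKnots (k : ℕ) (τ : ℕ → ℝ) : Prop :=
  (∀ i, 1 ≤ i → i ≤ k → 0 < τ i ∧ τ i < 1) ∧
  (∀ i j, 1 ≤ i → i < j → j ≤ k → τ i < τ j)

/-- `f : ℝ → ℝ` is a spline of degree `p` with `C^s` smoothness at the `k` interior knots
`τ 1 < ⋯ < τ k` of the open knot vector `T^{p,s}_k` on `[0,1]`:  on each piece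
`[kn i, kn (i+1)]` it coincides with a polynomial `P i` of degree at most `p`, the first and
last pieces being extended polynomially beyond `0` and `1`, and at each interior knot the
derivatives of the adjacent polynomial pieces agree up to order `s`. -/
def SplinePred (p s k : ℕ) (τ : ℕ → ℝ) (f : ℝ → ℝ) : Prop :=
  ∃ P : ℕ → Polynomial ℝ,
    (∀ i, (P i).natDegree ≤ p) ∧
    (∀ i, i ≤ k → ∀ x ∈ Set.Icc (kn k τ i) (kn k τ (i + 1)), f x = (P i).eval x) ∧
    (∀ x : ℝ, x ≤ 0 → f x = (P 0).eval x) ∧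
    (∀ x : ℝ, 1 ≤ x → f x = (P k).eval x) ∧
    (∀ i, 1 ≤ i → i ≤ k → ∀ j, j ≤ s →
      (derivative^[j] (P (i - 1))).eval (τ i) = (derivative^[j] (P i)).eval (τ i))

/-- The spline space `S(T^{p,s}_k, [0,1])` as a subspace of `ℝ → ℝ`. -/
noncomputable def SplineSpace (p s k : ℕ) (τ : ℕ → ℝ) : Submodule ℝ (ℝ → ℝ) where
  carrier := {f | SplinePred p s k τ f}
  add_mem' := by
    rintro a b ⟨P, hPd, hPp, hPl, hPr, hPs⟩ ⟨Q, hQd, hQp, hQl, hQr, hQs⟩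
    refine ⟨fun i => P i + Q i, fun i => ?_, fun i hi x hx => ?_, fun x hx => ?_,
      fun x hx => ?_, fun i h1 h2 j hj => ?_⟩
    · exact le_trans (Polynomial.natDegree_add_le _ _) (max_le (hPd i) (hQd i))
    · simp [Pi.add_apply, hPp i hi x hx, hQp i hi x hx]
    · simp [Pi.add_apply, hPl x hx, hQl x hx]
    · simp [Pi.add_apply, hPr x hx, hQr x hx]
    · have hadd : ∀ (j : ℕ) (P Q : Polynomial ℝ),
          derivative^[j] (P + Q) = derivative^[j] P + derivative^[j] Q := by
        intro j
        induction j with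
        | zero => simp
        | succ n ih => intro P Q; simp [Function.iterate_succ_apply, derivative_add, ih]
      simp [hadd, hPs i h1 h2 j hj, hQs i h1 h2 j hj]
  zero_mem' :=
    ⟨fun _ => 0, by simp, by simp, by simp, by simp, by simp⟩
  smul_mem' := by
    rintro c a ⟨P, hPd, hPp, hPl, hPr, hPs⟩
    refine ⟨fun i => Polynomial.C c * P i, fun i => ?_, fun i hi x hx => ?_, fun x hx => ?_,
      fun x hx => ?_, fun i h1 h2 j hj => ?_⟩
    · exact le_trans (Polynomial.natDegree_C_mul_le _ _) (hPd i)
    · simp [Pi.smul_apply, smul_eq_mul, hPp i hi x hx]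
    · simp [Pi.smul_apply, smul_eq_mul, hPl x hx]
    · simp [Pi.smul_apply, smul_eq_mul, hPr x hx]
    · simp [Polynomial.iterate_derivative_C_mul, hPs i h1 h2 j hj]

/-- If `β ≡ 0`, the C¹ coupling condition `αR(v)·D_u g^{(L)}(0,v) = αL(v)·D_u g^{(R)}(0,v)`
(here `fL, fR` denote the spline traces `D_u g^{(L)}(0,·), D_u g^{(R)}(0,·) ∈ S(T^{p,r}_k)`)
together with coprimality of the degree-≤1 polynomials `αL, αR` implies that there is a
function `g₁` with `fS = α^{(S)}·g₁` on `[0,1]` for `S ∈ {L,R}`, and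
`g₁ ∈ S(T^{p−d_α,r}_k, [0,1])` where `d_α = max(deg αL, deg αR)`. -/

private lemma poly_eq_of_agree_Icc {a b : ℝ} (hab : a < b) {P Q : Polynomial ℝ}
    (h : ∀ x ∈ Set.Icc a b, P.eval x = Q.eval x) : P = Q := by
  have hinf : {x : ℝ | (P - Q).IsRoot x}.Infinite := by
    have : Set.Icc a b ⊆ {x : ℝ | (P - Q).IsRoot x} := by
      intro x hx
      simp [Polynomial.IsRoot, sub_eq_zero, h x hx]
    exact Set.Infinite.mono this (Set.infinite_coe_iff.mp (Set.Icc.infinite hab))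
  have := Polynomial.eq_zero_of_infinite_isRoot _ hinf
  exact sub_eq_zero.mp this

private lemma coprime_factor {a b x y : Polynomial ℝ} (h : IsCoprime a b)
    (he : b * x = a * y) : ∃ q, x = a * q ∧ y = b * q := by
  by_cases ha : a = 0
  · subst ha
    have hb : IsUnit b := isCoprime_zero_left.mp h
    have hb0 : b ≠ 0 := hb.ne_zero
    have hx : x = 0 := by
      have : b * x = 0 := by simpa using he
      exact (mul_eq_zero.mp this).resolve_left hb0
    obtain ⟨u, hu⟩ := hb
    exact ⟨(↑u⁻¹ : Polynomial ℝ) * y, by simp [hx], by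
      rw [← mul_assoc, ← hu, Units.mul_inv, one_mul]⟩
  · have hdvd : a ∣ x := by
      refine h.dvd_of_dvd_mul_right ?_
      exact ⟨y, by rw [← he]; ring⟩
    obtain ⟨q, hq⟩ := hdvd
    refine ⟨q, hq, ?_⟩
    apply mul_left_cancel₀ ha
    rw [← he, hq]; ring

private lemma deriv_transfer (α F : Polynomial ℝ) (t : ℝ) (hα : α.eval t ≠ 0) (r : ℕ)
    (h : ∀ j, j ≤ r → (derivative^[j] (α * F)).eval t = 0) :
    ∀ j, j ≤ r → (derivative^[j] F).eval t = 0 := by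
  intro j
  induction j using Nat.strong_induction_on with
  | _ j ih =>
    intro hj
    have h0 := h j hj
    rw [Polynomial.iterate_derivative_mul, Finset.sum_range_succ] at h0
    rw [Polynomial.eval_add, Polynomial.eval_finset_sum] at h0
    have hsum : ∀ m ∈ Finset.range j,
        ((j.choose m • (derivative^[j - m] α * derivative^[m] F)).eval t) = 0 := by
      intro m hm
      have hm' := Finset.mem_range.mp hm
      simp only [nsmul_eq_mul, Polynomial.eval_mul, Polynomial.eval_natCast]
      rw [ih m hm' (le_trans hm'.le hj), mul_zero, mul_zero]
    rw [Finset.sum_eq_zero hsum, zero_add] at h0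
    simp only [Nat.sub_self, Nat.choose_self, one_smul, Function.iterate_zero, id_eq,
      Polynomial.eval_mul] at h0
    exact (mul_eq_zero.mp h0).resolve_left hα

private lemma kn_nonneg {k : ℕ} {τ : ℕ → ℝ} (hτ : ValidKnots k τ) (i : ℕ) :
    0 ≤ kn k τ i := by
  unfold kn
  split
  · exact le_refl 0
  · split
    · next h1 h2 => exact (hτ.1 i (Nat.one_le_iff_ne_zero.mpr h1) h2).1.le
    · exact zero_le_one

private lemma kn_le_one {k : ℕ} {τ : ℕ → ℝ} (hτ : ValidKnots k τ) (i : ℕ) :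
    kn k τ i ≤ 1 := by
  unfold kn
  split
  · exact zero_le_one
  · split
    · next h1 h2 => exact (hτ.1 i (Nat.one_le_iff_ne_zero.mpr h1) h2).2.le
    · exact le_refl 1

private lemma kn_lt {k : ℕ} {τ : ℕ → ℝ} (hτ : ValidKnots k τ) {a b : ℕ}
    (hab : a < b) (hb : b ≤ k + 1) : kn k τ a < kn k τ b := by
  have hbne : b ≠ 0 := by omega
  rcases Nat.lt_or_ge k b with hbk | hbk
  · -- b = k + 1, kn b = 1 (or b > k)
    have hknb : kn k τ b = 1 := by unfold kn; simp [hbne, Nat.not_le.mpr hbk]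
    rw [hknb]
    unfold kn
    split
    · exact zero_lt_one
    · next h1 =>
      have ha1 : 1 ≤ a := Nat.one_le_iff_ne_zero.mpr h1
      have hak : a ≤ k := by omega
      simp [Nat.not_lt.mp (by omega : ¬ k < a), hak]
      exact (hτ.1 a ha1 hak).2
  · -- b ≤ k
    have hknb : kn k τ b = τ b := by unfold kn; simp [hbne, hbk]
    rw [hknb]
    unfold kn
    split
    · exact (hτ.1 b (Nat.one_le_iff_ne_zero.mpr hbne) hbk).1
    · next h1 =>
      have hak : a ≤ k := by omega
      simp [hak]
      exact hτ.2 a b (Nat.one_le_iff_ne_zero.mpr h1) hab hbk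

/-- Index of the knot interval containing `x`. -/
noncomputable def pieceIdx (k : ℕ) (τ : ℕ → ℝ) (x : ℝ) : ℕ :=
  sSup {i | i ≤ k ∧ kn k τ i ≤ x}

private lemma pieceIdx_spec {k : ℕ} {τ : ℕ → ℝ} (hτ : ValidKnots k τ) {x : ℝ}
    (hx : x ∈ Set.Icc (0:ℝ) 1) :
    pieceIdx k τ x ≤ k ∧ kn k τ (pieceIdx k τ x) ≤ x ∧ x ≤ kn k τ (pieceIdx k τ x + 1) := by
  have hne : ({i | i ≤ k ∧ kn k τ i ≤ x}).Nonempty := ⟨0, by simp [kn, hx.1]⟩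
  have hbdd : BddAbove {i | i ≤ k ∧ kn k τ i ≤ x} := ⟨k, fun i hi => hi.1⟩
  have hmem : pieceIdx k τ x ∈ {i | i ≤ k ∧ kn k τ i ≤ x} := Nat.sSup_mem hne hbdd
  refine ⟨hmem.1, hmem.2, ?_⟩
  by_contra hlt
  push_neg at hlt
  rcases Nat.lt_or_ge (pieceIdx k τ x) k with hk | hk
  · have hmem2 : pieceIdx k τ x + 1 ∈ {i | i ≤ k ∧ kn k τ i ≤ x} := ⟨by omega, hlt.le⟩
    have h2 : pieceIdx k τ x + 1 ≤ pieceIdx k τ x := le_csSup hbdd hmem2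
    omega
  · have hsk : pieceIdx k τ x = k := le_antisymm hmem.1 hk
    have h1 : kn k τ (k + 1) = 1 := by unfold kn; simp
    rw [hsk, h1] at hlt
    exact absurd hx.2 (not_le.mpr hlt)
private lemma kn_pos {k : ℕ} {τ : ℕ → ℝ} (hτ : ValidKnots k τ) {i : ℕ} (hi : 1 ≤ i) :
    0 < kn k τ i := by
  unfold kn
  split
  · omega
  · split
    · next h1 h2 => exact (hτ.1 i hi h2).1
    · exact zero_lt_one
theorem stmt18 (p r k : ℕ) (τ : ℕ → ℝ) (hτ : ValidKnots k τ)
    (hr1 : 1 ≤ r) (hrp : r < p)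
    (αL αR : Polynomial ℝ)
    (hαL : αL.natDegree ≤ 1) (hαR : αR.natDegree ≤ 1)
    (hcop : IsCoprime αL αR)
    (fL fR : ℝ → ℝ)
    (hfL : SplinePred p r k τ fL) (hfR : SplinePred p r k τ fR)
    (heq : ∀ v ∈ Set.Icc (0:ℝ) 1, αR.eval v * fL v = αL.eval v * fR v) :
    ∃ g₁ : ℝ → ℝ,
      (∀ v ∈ Set.Icc (0:ℝ) 1, fL v = αL.eval v * g₁ v ∧ fR v = αR.eval v * g₁ v) ∧
      SplinePred (p - max αL.natDegree αR.natDegree) r k τ g₁ := by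
  obtain ⟨PL, hPLd, hPLp, hPLl, hPLr, hPLs⟩ := hfL
  obtain ⟨PR, hPRd, hPRp, hPRl, hPRr, hPRs⟩ := hfR
  set d := max αL.natDegree αR.natDegree with hd
  -- not both α's are zero
  have hnot00 : ¬ (αL = 0 ∧ αR = 0) := by
    rintro ⟨h1, h2⟩
    rw [h1, h2] at hcop
    exact (isCoprime_zero_left.mp hcop).ne_zero rfl
  -- each interval is nondegenerate and inside [0,1]
  have hsub : ∀ i, i ≤ k → Set.Icc (kn k τ i) (kn k τ (i+1)) ⊆ Set.Icc (0:ℝ) 1 := by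
    intro i hi
    exact Set.Icc_subset_Icc (kn_nonneg hτ i) (kn_le_one hτ (i+1))
  have hlt : ∀ i, i ≤ k → kn k τ i < kn k τ (i+1) := by
    intro i hi
    exact kn_lt hτ (Nat.lt_succ_self i) (by omega)
  -- Step A: polynomial identity on each piece
  have hpoly : ∀ i, i ≤ k → αR * PL i = αL * PR i := by
    intro i hi
    apply poly_eq_of_agree_Icc (hlt i hi)
    intro x hx
    have hx01 := hsub i hi hx
    simp only [Polynomial.eval_mul]
    rw [← hPLp i hi x hx, ← hPRp i hi x hx]
    exact heq x hx01
  -- Step B: extract the common factor on each piece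
  have hQex : ∀ i, ∃ q : Polynomial ℝ, i ≤ k → PL i = αL * q ∧ PR i = αR * q := by
    intro i
    by_cases hi : i ≤ k
    · obtain ⟨q, hq1, hq2⟩ := coprime_factor hcop (hpoly i hi)
      exact ⟨q, fun _ => ⟨hq1, hq2⟩⟩
    · exact ⟨0, fun h => absurd h hi⟩
  choose Q hQ using hQex
  -- Step C: pick a witness α0 of maximal degree, nonzero
  obtain ⟨α0, P0, hα0ne, hα0d, hP0d, hP0f⟩ :
      ∃ (α0 : Polynomial ℝ) (P0 : ℕ → Polynomial ℝ), α0 ≠ 0 ∧ d ≤ α0.natDegree ∧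
        (∀ i, (P0 i).natDegree ≤ p) ∧ (∀ i, i ≤ k → P0 i = α0 * Q i) := by
    by_cases hRL : αR.natDegree ≤ αL.natDegree
    · by_cases hL0 : αL = 0
      · have hR0 : αR ≠ 0 := fun h => hnot00 ⟨hL0, h⟩
        refine ⟨αR, PR, hR0, ?_, hPRd, fun i hi => (hQ i hi).2⟩
        rw [hd, hL0]
        simp
      · exact ⟨αL, PL, hL0, by rw [hd]; exact max_le le_rfl hRL, hPLd,
          fun i hi => (hQ i hi).1⟩
    · have hR0 : αR ≠ 0 := by
        intro h
        rw [h] at hRL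
        simp at hRL
      exact ⟨αR, PR, hR0, by rw [hd]; exact max_le (le_of_lt (not_le.mp hRL)) le_rfl,
        hPRd, fun i hi => (hQ i hi).2⟩
  -- degree bound for Q
  have hQd : ∀ i, i ≤ k → (Q i).natDegree ≤ p - d := by
    intro i hi
    by_cases hQ0 : Q i = 0
    · simp [hQ0]
    · have h1 : (P0 i).natDegree = α0.natDegree + (Q i).natDegree := by
        rw [hP0f i hi]; exact Polynomial.natDegree_mul hα0ne hQ0
      have := hP0d i
      rw [h1] at this
      omega
  -- smoothness of Q at interior knots
  have hQs : ∀ i, 1 ≤ i → i ≤ k → ∀ j, j ≤ r →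
      (derivative^[j] (Q (i - 1))).eval (τ i) = (derivative^[j] (Q i)).eval (τ i) := by
    intro i h1 h2 j hj
    -- pick α with nonzero value at τ i
    obtain ⟨a, b, hab⟩ := hcop
    have hnz : αL.eval (τ i) ≠ 0 ∨ αR.eval (τ i) ≠ 0 := by
      by_contra h
      push_neg at h
      have := congrArg (Polynomial.eval (τ i)) hab
      simp [h.1, h.2] at this
    have key : ∀ (α : Polynomial ℝ) (PP : ℕ → Polynomial ℝ),
        α.eval (τ i) ≠ 0 → (∀ m, m ≤ k → PP m = α * Q m) →
        (∀ j', j' ≤ r → (derivative^[j'] (PP (i-1))).eval (τ i) = (derivative^[j'] (PP i)).eval (τ i)) →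
        (derivative^[j] (Q (i - 1))).eval (τ i) = (derivative^[j] (Q i)).eval (τ i) := by
      intro α PP hα hPP hsm
      have h0 : ∀ j', j' ≤ r →
          (derivative^[j'] (α * (Q (i-1) - Q i))).eval (τ i) = 0 := by
        intro j' hj'
        have : α * (Q (i-1) - Q i) = PP (i-1) - PP i := by
          rw [hPP (i-1) (by omega), hPP i h2]; ring
        rw [this, Polynomial.iterate_derivative_sub, Polynomial.eval_sub,
          hsm j' hj', sub_self]
      have := deriv_transfer α (Q (i-1) - Q i) (τ i) hα r h0 j hj
      rw [Polynomial.iterate_derivative_sub, Polynomial.eval_sub, sub_eq_zero] at this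
      exact this
    rcases hnz with hnz | hnz
    · exact key αL PL hnz (fun m hm => (hQ m hm).1) (fun j' hj' => hPLs i h1 h2 j' hj')
    · exact key αR PR hnz (fun m hm => (hQ m hm).2) (fun j' hj' => hPRs i h1 h2 j' hj')
  -- agreement of adjacent Q's at knots (order 0)
  have hQ0s : ∀ i, 1 ≤ i → i ≤ k → (Q (i-1)).eval (τ i) = (Q i).eval (τ i) := by
    intro i h1 h2
    have := hQs i h1 h2 0 (Nat.zero_le r)
    simpa using this
  -- define g₁
  set Q' : ℕ → Polynomial ℝ := fun i => Q (min i k) with hQ'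
  set g₁ : ℝ → ℝ := fun x => (Q' (pieceIdx k τ x)).eval x with hg₁
  have hQ'eq : ∀ i, i ≤ k → Q' i = Q i := by
    intro i hi; simp [hQ', min_eq_left hi]
  -- the piecewise evaluation lemma
  have hpieceval : ∀ i, i ≤ k → ∀ x ∈ Set.Icc (kn k τ i) (kn k τ (i+1)),
      g₁ x = (Q i).eval x := by
    intro i hi x hx
    have hx01 : x ∈ Set.Icc (0:ℝ) 1 := hsub i hi hx
    obtain ⟨hm1, hm2, hm3⟩ := pieceIdx_spec hτ hx01
    set m := pieceIdx k τ x with hmdef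
    have hims : i ∈ {j | j ≤ k ∧ kn k τ j ≤ x} := ⟨hi, hx.1⟩
    have hbdd : BddAbove {j | j ≤ k ∧ kn k τ j ≤ x} := ⟨k, fun j hj => hj.1⟩
    have him : i ≤ m := le_csSup hbdd hims
    rcases Nat.eq_or_lt_of_le him with heq' | hlt'
    · show (Q' m).eval x = (Q i).eval x
      rw [hQ'eq m hm1, ← heq']
    · -- i < m; then m = i + 1 and x = τ m
      have hm_eq : m = i + 1 := by
        by_contra hne
        have h2 : i + 1 < m := by omega
        have := kn_lt hτ h2 (by omega)
        have hx2 := hx.2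
        -- kn (i+1) < kn m ≤ x ≤ kn (i+1)
        linarith [hm2]
      have hxm : x = kn k τ m := le_antisymm (hm_eq ▸ hx.2) hm2
      have hm1le : 1 ≤ m := by omega
      have hknm : kn k τ m = τ m := by
        unfold kn
        rw [if_neg (show ¬ m = 0 by omega), if_pos hm1]
      have : (Q m).eval (τ m) = (Q i).eval (τ m) := by
        have := hQ0s m hm1le hm1
        rw [hm_eq] at this ⊢
        simpa using this.symm
      show (Q' m).eval x = (Q i).eval x
      rw [hQ'eq m hm1, hxm, hknm, this]
  refine ⟨g₁, ?_, ?_⟩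
  · -- pointwise factorization on [0,1]
    intro v hv
    obtain ⟨hm1, hm2, hm3⟩ := pieceIdx_spec hτ hv
    set m := pieceIdx k τ v with hmdef
    have hvmem : v ∈ Set.Icc (kn k τ m) (kn k τ (m+1)) := ⟨hm2, hm3⟩
    have hgv : g₁ v = (Q m).eval v := by
      show (Q' m).eval v = (Q m).eval v
      rw [hQ'eq m hm1]
    constructor
    · rw [hPLp m hm1 v hvmem, (hQ m hm1).1, Polynomial.eval_mul, hgv]
    · rw [hPRp m hm1 v hvmem, (hQ m hm1).2, Polynomial.eval_mul, hgv]
  · -- SplinePred for g₁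
    refine ⟨Q', fun i => ?_, fun i hi x hx => ?_, fun x hx => ?_, fun x hx => ?_,
      fun i h1 h2 j hj => ?_⟩
    · show (Q (min i k)).natDegree ≤ p - d
      exact hQd (min i k) (min_le_right i k)
    · rw [hQ'eq i hi]
      exact hpieceval i hi x hx
    · -- x ≤ 0 : pieceIdx = 0
      have hidx : pieceIdx k τ x = 0 := by
        unfold pieceIdx
        set s : Set ℕ := {i | i ≤ k ∧ kn k τ i ≤ x} with hs
        rcases Set.eq_empty_or_nonempty s with he | hne
        · rw [he]; exact csSup_empty
        · have hbdd : BddAbove s := ⟨k, fun j hj => hj.1⟩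
          have hmem := Nat.sSup_mem hne hbdd
          by_contra h0
          have h1 : 1 ≤ sSup s := Nat.one_le_iff_ne_zero.mpr h0
          have := kn_pos hτ h1
          have := hmem.2
          linarith
      show (Q' (pieceIdx k τ x)).eval x = (Q' 0).eval x
      rw [hidx]
    · -- 1 ≤ x : pieceIdx = k
      have hidx : pieceIdx k τ x = k := by
        unfold pieceIdx
        set s : Set ℕ := {i | i ≤ k ∧ kn k τ i ≤ x} with hs
        have hkmem : k ∈ s := ⟨le_refl k, le_trans (kn_le_one hτ k) hx⟩
        have hbdd : BddAbove s := ⟨k, fun j hj => hj.1⟩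
        exact le_antisymm (csSup_le ⟨k, hkmem⟩ (fun j hj => hj.1)) (le_csSup hbdd hkmem)
      show (Q' (pieceIdx k τ x)).eval x = (Q' k).eval x
      rw [hidx]
    · rw [hQ'eq (i-1) (by omega), hQ'eq i h2]
      exact hQs i h1 h2 j hj
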